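/- For every square (x,y) of the 8×8 chessboard with 3 ≤ x ≤ 7 and 1 ≤ y ≤ 3 (the box c1–g3), there is a knight path of length at most 4, with all squares on the board, from b8 = (2,8) to (x,y) or from g8 = (7,8) to (x,y). (This is the key coverage claim in the proof that Multimove Chess (i,j) with i ≤ 3 and j ≥ 4 is a win for Black: in at most four moves a Black knight starting from its home square can reach any square of the box c1–g3.) -/
import Mathlib


/-- A square is on the 8×8 board if both coordinates are between 1 and 8. -/
def OnBoard (p : ℤ × ℤ) : Prop :=
  1 ≤ p.1 ∧ p.1 ≤ 8 ∧ 1 ≤ p.2 ∧ p.2 ≤ 8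

/-- A knight move: the multiset of coordinate distances is {1, 2}. -/
def KnightMove (p q : ℤ × ℤ) : Prop :=
  ({|p.1 - q.1|, |p.2 - q.2|} : Set ℤ) = ({1, 2} : Set ℤ)

/-- A knight path of length `n` from `p` to `q`: a sequence of squares on the
board starting at `p`, ending at `q`, with consecutive squares a knight move apart. -/
def KnightPath (n : ℕ) (p q : ℤ × ℤ) : Prop :=
  ∃ s : ℕ → ℤ × ℤ, s 0 = p ∧ s n = q ∧
    (∀ i ≤ n, OnBoard (s i)) ∧
    (∀ i < n, KnightMove (s i) (s (i + 1)))

lemma km (p q : ℤ × ℤ)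
    (h : (|p.1 - q.1| = 1 ∧ |p.2 - q.2| = 2) ∨ (|p.1 - q.1| = 2 ∧ |p.2 - q.2| = 1)) :
    KnightMove p q := by
  unfold KnightMove
  rcases h with ⟨h1, h2⟩ | ⟨h1, h2⟩
  · rw [h1, h2]
  · rw [h1, h2, Set.pair_comm]

lemma kp_3_1 : KnightPath 4 (2, 8) (3, 1) := by
  refine ⟨fun i => [(2, 8), (3, 6), (4, 4), (5, 2), (3, 1)].getD i (1, 1), rfl, rfl, ?_, ?_⟩
  · intro i hi
    interval_cases i <;> exact ⟨by norm_num, by norm_num, by norm_num, by norm_num⟩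
  · intro i hi
    interval_cases i <;> exact km _ _ (by norm_num)

lemma kp_3_2 : KnightPath 3 (2, 8) (3, 2) := by
  refine ⟨fun i => [(2, 8), (3, 6), (4, 4), (3, 2)].getD i (1, 1), rfl, rfl, ?_, ?_⟩
  · intro i hi
    interval_cases i <;> exact ⟨by norm_num, by norm_num, by norm_num, by norm_num⟩
  · intro i hi
    interval_cases i <;> exact km _ _ (by norm_num)

lemma kp_3_3 : KnightPath 3 (7, 8) (3, 3) := by
  refine ⟨fun i => [(7, 8), (6, 6), (5, 4), (3, 3)].getD i (1, 1), rfl, rfl, ?_, ?_⟩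
  · intro i hi
    interval_cases i <;> exact ⟨by norm_num, by norm_num, by norm_num, by norm_num⟩
  · intro i hi
    interval_cases i <;> exact km _ _ (by norm_num)

lemma kp_4_1 : KnightPath 4 (7, 8) (4, 1) := by
  refine ⟨fun i => [(7, 8), (8, 6), (7, 4), (6, 2), (4, 1)].getD i (1, 1), rfl, rfl, ?_, ?_⟩
  · intro i hi
    interval_cases i <;> exact ⟨by norm_num, by norm_num, by norm_num, by norm_num⟩
  · intro i hi
    interval_cases i <;> exact km _ _ (by norm_num)

lemma kp_4_2 : KnightPath 3 (7, 8) (4, 2) := by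
  refine ⟨fun i => [(7, 8), (6, 6), (5, 4), (4, 2)].getD i (1, 1), rfl, rfl, ?_, ?_⟩
  · intro i hi
    interval_cases i <;> exact ⟨by norm_num, by norm_num, by norm_num, by norm_num⟩
  · intro i hi
    interval_cases i <;> exact km _ _ (by norm_num)

lemma kp_4_3 : KnightPath 3 (2, 8) (4, 3) := by
  refine ⟨fun i => [(2, 8), (3, 6), (5, 5), (4, 3)].getD i (1, 1), rfl, rfl, ?_, ?_⟩
  · intro i hi
    interval_cases i <;> exact ⟨by norm_num, by norm_num, by norm_num, by norm_num⟩
  · intro i hi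
    interval_cases i <;> exact km _ _ (by norm_num)

lemma kp_5_1 : KnightPath 4 (2, 8) (5, 1) := by
  refine ⟨fun i => [(2, 8), (3, 6), (4, 4), (6, 3), (5, 1)].getD i (1, 1), rfl, rfl, ?_, ?_⟩
  · intro i hi
    interval_cases i <;> exact ⟨by norm_num, by norm_num, by norm_num, by norm_num⟩
  · intro i hi
    interval_cases i <;> exact km _ _ (by norm_num)

lemma kp_5_2 : KnightPath 3 (2, 8) (5, 2) := by
  refine ⟨fun i => [(2, 8), (3, 6), (4, 4), (5, 2)].getD i (1, 1), rfl, rfl, ?_, ?_⟩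
  · intro i hi
    interval_cases i <;> exact ⟨by norm_num, by norm_num, by norm_num, by norm_num⟩
  · intro i hi
    interval_cases i <;> exact km _ _ (by norm_num)

lemma kp_5_3 : KnightPath 3 (7, 8) (5, 3) := by
  refine ⟨fun i => [(7, 8), (8, 6), (7, 4), (5, 3)].getD i (1, 1), rfl, rfl, ?_, ?_⟩
  · intro i hi
    interval_cases i <;> exact ⟨by norm_num, by norm_num, by norm_num, by norm_num⟩
  · intro i hi
    interval_cases i <;> exact km _ _ (by norm_num)

lemma kp_6_1 : KnightPath 4 (7, 8) (6, 1) := by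
  refine ⟨fun i => [(7, 8), (8, 6), (7, 4), (8, 2), (6, 1)].getD i (1, 1), rfl, rfl, ?_, ?_⟩
  · intro i hi
    interval_cases i <;> exact ⟨by norm_num, by norm_num, by norm_num, by norm_num⟩
  · intro i hi
    interval_cases i <;> exact km _ _ (by norm_num)

lemma kp_6_2 : KnightPath 3 (7, 8) (6, 2) := by
  refine ⟨fun i => [(7, 8), (8, 6), (7, 4), (6, 2)].getD i (1, 1), rfl, rfl, ?_, ?_⟩
  · intro i hi
    interval_cases i <;> exact ⟨by norm_num, by norm_num, by norm_num, by norm_num⟩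
  · intro i hi
    interval_cases i <;> exact km _ _ (by norm_num)

lemma kp_6_3 : KnightPath 3 (2, 8) (6, 3) := by
  refine ⟨fun i => [(2, 8), (3, 6), (4, 4), (6, 3)].getD i (1, 1), rfl, rfl, ?_, ?_⟩
  · intro i hi
    interval_cases i <;> exact ⟨by norm_num, by norm_num, by norm_num, by norm_num⟩
  · intro i hi
    interval_cases i <;> exact km _ _ (by norm_num)

lemma kp_7_1 : KnightPath 4 (2, 8) (7, 1) := by
  refine ⟨fun i => [(2, 8), (3, 6), (4, 4), (5, 2), (7, 1)].getD i (1, 1), rfl, rfl, ?_, ?_⟩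
  · intro i hi
    interval_cases i <;> exact ⟨by norm_num, by norm_num, by norm_num, by norm_num⟩
  · intro i hi
    interval_cases i <;> exact km _ _ (by norm_num)

lemma kp_7_2 : KnightPath 4 (7, 8) (7, 2) := by
  refine ⟨fun i => [(7, 8), (8, 6), (7, 4), (5, 3), (7, 2)].getD i (1, 1), rfl, rfl, ?_, ?_⟩
  · intro i hi
    interval_cases i <;> exact ⟨by norm_num, by norm_num, by norm_num, by norm_num⟩
  · intro i hi
    interval_cases i <;> exact km _ _ (by norm_num)

lemma kp_7_3 : KnightPath 3 (7, 8) (7, 3) := by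
  refine ⟨fun i => [(7, 8), (8, 6), (6, 5), (7, 3)].getD i (1, 1), rfl, rfl, ?_, ?_⟩
  · intro i hi
    interval_cases i <;> exact ⟨by norm_num, by norm_num, by norm_num, by norm_num⟩
  · intro i hi
    interval_cases i <;> exact km _ _ (by norm_num)

/-- Every square of the box c1–g3 is reachable in at most 4 knight moves
from b8 = (2,8) or from g8 = (7,8). -/
theorem knights_b8_g8_cover_box :
    ∀ x y : ℤ, 3 ≤ x → x ≤ 7 → 1 ≤ y → y ≤ 3 →
      ∃ n ≤ 4, KnightPath n (2, 8) (x, y) ∨ KnightPath n (7, 8) (x, y) := by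
  intro x y h1 h2 h3 h4
  interval_cases x <;> interval_cases y
  · exact ⟨4, by norm_num, Or.inl kp_3_1⟩
  · exact ⟨3, by norm_num, Or.inl kp_3_2⟩
  · exact ⟨3, by norm_num, Or.inr kp_3_3⟩
  · exact ⟨4, by norm_num, Or.inr kp_4_1⟩
  · exact ⟨3, by norm_num, Or.inr kp_4_2⟩
  · exact ⟨3, by norm_num, Or.inl kp_4_3⟩
  · exact ⟨4, by norm_num, Or.inl kp_5_1⟩
  · exact ⟨3, by norm_num, Or.inl kp_5_2⟩
  · exact ⟨3, by norm_num, Or.inr kp_5_3⟩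
  · exact ⟨4, by norm_num, Or.inr kp_6_1⟩
  · exact ⟨3, by norm_num, Or.inr kp_6_2⟩
  · exact ⟨3, by norm_num, Or.inl kp_6_3⟩
  · exact ⟨4, by norm_num, Or.inl kp_7_1⟩
  · exact ⟨4, by norm_num, Or.inr kp_7_2⟩
  · exact ⟨3, by norm_num, Or.inr kp_7_3⟩
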